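/- Let α, β > 0 be real numbers and let h : ℝ → ℝ≥0∞ be a measurable function. Let φ : ℝ → ℝ be φ(z) = β·(αz/2 + √((αz/2)² + 1))², and let μ be the measure on ℝ with density z ↦ h(z²) with respect to Lebesgue measure. Then the pushforward measure of μ under φ equals the measure on ℝ with density, with respect to Lebesgue measure, t ↦ ENNReal.ofReal(t^(−3/2)·(t + β)/(2·α·√β)) · h((1/α²)·(t/β + β/t − 2)) for t > 0 and 0 for t ≤ 0. -/

import Mathlib

open MeasureTheory Real Set
open scoped ENNReal

private lemma gbs_sq_pos (u : ℝ) : 0 < Real.sqrt (u^2+1) := Real.sqrt_pos.2 (by positivity)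

private lemma gbs_sqsq (u : ℝ) : Real.sqrt (u^2+1) ^ 2 = u^2+1 := Real.sq_sqrt (by positivity)

private lemma gbs_w_pos (u : ℝ) : 0 < u + Real.sqrt (u^2+1) := by
  nlinarith [gbs_sq_pos u, gbs_sqsq u]

private lemma gbs_w_sq (u : ℝ) :
    (u + Real.sqrt (u^2+1))^2 = 2*u*(u + Real.sqrt (u^2+1)) + 1 := by
  nlinarith [gbs_sqsq u]

private lemma gbs_deriv (α β z : ℝ) :
    HasDerivAt (fun z : ℝ => β * (α * z / 2 + Real.sqrt ((α * z / 2) ^ 2 + 1)) ^ 2)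
      (α * β * (α * z / 2 + Real.sqrt ((α * z / 2) ^ 2 + 1)) ^ 2
        / Real.sqrt ((α * z / 2) ^ 2 + 1)) z := by
  have hu : HasDerivAt (fun z : ℝ => α * z / 2) (α/2) z := by
    simpa using ((hasDerivAt_id z).const_mul α).div_const 2
  have hg : HasDerivAt (fun z : ℝ => (α * z / 2)^2 + 1) (2*(α*z/2)^1*(α/2)) z :=
    (hu.pow 2).add_const 1
  have hs0 : (α*z/2)^2 + 1 ≠ 0 := by positivity
  have hsq : HasDerivAt (fun z : ℝ => Real.sqrt ((α*z/2)^2+1))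
      (2*(α*z/2)^1*(α/2) / (2 * Real.sqrt ((α*z/2)^2+1))) z := hg.sqrt hs0
  have hw := hu.add hsq
  have hfin := (hw.pow 2).const_mul β
  refine hfin.congr_deriv ?_
  simp only [Pi.add_apply, Nat.cast_ofNat]
  set u := α*z/2
  set s := Real.sqrt (u^2+1) with hsdef
  have hspos : 0 < s := gbs_sq_pos u
  have hss : s^2 = u^2+1 := gbs_sqsq u
  field_simp
  ring_nf

private lemma gbs_inj (α β : ℝ) (hα : 0 < α) (hβ : 0 < β) :
    Function.Injective
      (fun z : ℝ => β * (α * z / 2 + Real.sqrt ((α * z / 2) ^ 2 + 1)) ^ 2) := by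
  intro z1 z2 hz
  simp only at hz
  set w1 := α*z1/2 + Real.sqrt ((α*z1/2)^2+1) with hw1
  set w2 := α*z2/2 + Real.sqrt ((α*z2/2)^2+1) with hw2
  have h1 : 0 < w1 := gbs_w_pos _
  have h2 : 0 < w2 := gbs_w_pos _
  have hsq1 : w1^2 = 2*(α*z1/2)*w1 + 1 := gbs_w_sq _
  have hsq2 : w2^2 = 2*(α*z2/2)*w2 + 1 := gbs_w_sq _
  have hww : w1 = w2 := by
    have : w1^2 = w2^2 := mul_left_cancel₀ hβ.ne' hz
    nlinarith [this, h1, h2]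
  rw [hww] at hsq1
  have heq := hsq1.symm.trans hsq2
  have h3 : (α*z1)*w2 = (α*z2)*w2 := by linear_combination heq
  have h4 := mul_right_cancel₀ h2.ne' h3
  exact mul_left_cancel₀ hα.ne' h4

private lemma gbs_range (α β : ℝ) (hα : 0 < α) (hβ : 0 < β) :
    Set.range (fun z : ℝ => β * (α * z / 2 + Real.sqrt ((α * z / 2) ^ 2 + 1)) ^ 2)
      = Set.Ioi 0 := by
  ext t
  simp only [Set.mem_range, Set.mem_Ioi]
  constructor
  · rintro ⟨z, rfl⟩
    have := gbs_w_pos (α*z/2)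
    positivity
  · intro ht
    set r := Real.sqrt (β*t) with hrdef
    have hr : 0 < r := Real.sqrt_pos.2 (by positivity)
    have hr2 : r^2 = β*t := Real.sq_sqrt (by positivity)
    refine ⟨(t - β)/(α*r), ?_⟩
    have hu : α * ((t - β)/(α*r)) / 2 = (t-β)/(2*r) := by
      field_simp
    rw [hu]
    have hsq : ((t-β)/(2*r))^2 + 1 = ((t+β)/(2*r))^2 := by
      field_simp
      nlinarith [hr2]
    rw [hsq, Real.sqrt_sq (by positivity)]
    have hsum : (t-β)/(2*r) + (t+β)/(2*r) = t/r := by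
      field_simp
      ring
    rw [hsum]
    field_simp
    nlinarith [hr2]

private lemma gbs_point (α β : ℝ) (hα : 0 < α) (hβ : 0 < β) (h : ℝ → ℝ≥0∞) (z : ℝ) :
    ENNReal.ofReal |α * β * (α * z / 2 + Real.sqrt ((α * z / 2) ^ 2 + 1)) ^ 2
        / Real.sqrt ((α * z / 2) ^ 2 + 1)| *
      (ENNReal.ofReal
          ((β * (α * z / 2 + Real.sqrt ((α * z / 2) ^ 2 + 1)) ^ 2) ^ (-(3 / 2) : ℝ) *
            (β * (α * z / 2 + Real.sqrt ((α * z / 2) ^ 2 + 1)) ^ 2 + β)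
              / (2 * α * Real.sqrt β)) *
        h ((1 / α ^ 2) *
          (β * (α * z / 2 + Real.sqrt ((α * z / 2) ^ 2 + 1)) ^ 2 / β +
            β / (β * (α * z / 2 + Real.sqrt ((α * z / 2) ^ 2 + 1)) ^ 2) - 2))) =
    h (z ^ 2) := by
  set u := α * z / 2 with hu
  set sq := Real.sqrt (u ^ 2 + 1) with hsqd
  set w := u + sq with hwd
  have hs : 0 < sq := gbs_sq_pos u
  have hss : sq^2 = u^2+1 := gbs_sqsq u
  have hw : 0 < w := by rw [hwd, hsqd]; exact gbs_w_pos u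
  have hwsq : w^2 = 2*u*w + 1 := by rw [hwd, hsqd]; exact gbs_w_sq u
  have harg : (1/α^2) * ((β*w^2)/β + β/(β*w^2) - 2) = z^2 := by
    have hwsq' : w^2 = α*z*w + 1 := by rw [hwsq, hu]; ring
    have hw0 : w ≠ 0 := hw.ne'
    field_simp
    linear_combination (w^2 - 1 + α*z*w) * hwsq'
  have hjac : (β*w^2) ^ (-(3/2) : ℝ) * ((β*w^2) + β) / (2*α*Real.sqrt β)
      = (w^2+1)/(2*α*β*w^3) := by
    have ht : (0:ℝ) < β*w^2 := by positivity
    have h32 : (β*w^2) ^ (-(3/2) : ℝ) = ((β*w^2) * Real.sqrt (β*w^2))⁻¹ := by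
      rw [Real.rpow_neg ht.le]
      congr 1
      rw [show (3/2 : ℝ) = 1 + 1/2 by norm_num, Real.rpow_add ht, Real.rpow_one,
        Real.sqrt_eq_rpow]
    have hst : Real.sqrt (β*w^2) = Real.sqrt β * w := by
      rw [Real.sqrt_mul hβ.le, Real.sqrt_sq hw.le]
    have hsb : Real.sqrt β ^ 2 = β := Real.sq_sqrt hβ.le
    have hsbpos : 0 < Real.sqrt β := Real.sqrt_pos.2 hβ
    rw [h32, hst]
    field_simp
    linear_combination -hsb
  have hprod : (α*β*w^2/sq) * ((w^2+1)/(2*α*β*w^3)) = 1 := by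
    field_simp
    linear_combination hwsq + 2*(u-sq)*hwd - 2*hss
  have hdpos : 0 < α*β*w^2/sq := by positivity
  rw [abs_of_pos hdpos, hjac, harg, ← mul_assoc, ← ENNReal.ofReal_mul hdpos.le, hprod,
    ENNReal.ofReal_one, one_mul]

/-- If `Z` has density `z ↦ h(z²)` with respect to Lebesgue measure, then
`T = β (αZ/2 + √((αZ/2)² + 1))²` has the generalised Birnbaum–Saunders density
`t ↦ (t^(−3/2)(t + β)/(2α√β)) · h((1/α²)(t/β + β/t − 2))` on `t > 0`
(equation (3) of the paper), formulated as an identity of measures. -/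
theorem stmt_17 (α β : ℝ) (hα : 0 < α) (hβ : 0 < β)
    (h : ℝ → ℝ≥0∞) (hh : Measurable h) :
    Measure.map (fun z : ℝ => β * (α * z / 2 + Real.sqrt ((α * z / 2) ^ 2 + 1)) ^ 2)
        (volume.withDensity fun z : ℝ => h (z ^ 2)) =
      volume.withDensity fun t : ℝ =>
        if 0 < t then
          ENNReal.ofReal (t ^ (-(3 / 2) : ℝ) * (t + β) / (2 * α * Real.sqrt β)) *
            h ((1 / α ^ 2) * (t / β + β / t - 2))
        else 0 := by
  set φ : ℝ → ℝ := fun z : ℝ => β * (α * z / 2 + Real.sqrt ((α * z / 2) ^ 2 + 1)) ^ 2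
    with hφdef
  set D : ℝ → ℝ≥0∞ := fun t : ℝ =>
    ENNReal.ofReal (t ^ (-(3 / 2) : ℝ) * (t + β) / (2 * α * Real.sqrt β)) *
      h ((1 / α ^ 2) * (t / β + β / t - 2)) with hDdef
  have hφc : Continuous φ := by
    rw [hφdef]
    fun_prop
  have hφm : Measurable φ := hφc.measurable
  refine Measure.ext fun s hs => ?_
  rw [Measure.map_apply hφm hs, withDensity_apply _ (hφm hs), withDensity_apply _ hs]
  have hR : (∫⁻ t in s, (if 0 < t then D t else 0)) = ∫⁻ t in Ioi 0 ∩ s, D t := by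
    have : (fun t : ℝ => if 0 < t then D t else 0) = (Ioi 0).indicator D := by
      funext t
      simp [Set.indicator_apply, Set.mem_Ioi]
    rw [this, lintegral_indicator measurableSet_Ioi,
      Measure.restrict_restrict measurableSet_Ioi]
  rw [hR]
  have hrange : Set.range φ = Set.Ioi 0 := gbs_range α β hα hβ
  have himg : φ '' (φ ⁻¹' s) = Ioi 0 ∩ s := by
    rw [Set.image_preimage_eq_inter_range, hrange, Set.inter_comm]
  have key := lintegral_image_eq_lintegral_abs_det_fderiv_mul volume (hφm hs)
    (fun x _ => ((gbs_deriv α β x).hasFDerivAt.hasFDerivWithinAt))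
    ((gbs_inj α β hα hβ).injOn) D
  rw [himg] at key
  rw [key]
  refine lintegral_congr fun z => ?_
  simp only [ContinuousLinearMap.det_toSpanSingleton]
  exact (gbs_point α β hα hβ h z).symm
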